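/- The 2-level Babel apartment Σ(2, A₁) = ⋃_{w ∈ W₂(A₁)} w[0,1] ⊂ ℤ lex× ℝ decomposes as the disjoint union ⨆_{n ∈ ℤ} (2n·ω₂ + ℝ), where W₂(A₁) is generated by the reflections x ↦ −x, x ↦ 2ω₁ − x, x ↦ 2ω₂ − x acting on ℤ lex× ℝ (with ω₁ = (0,1), ω₂ = (1,0)). -/

import Mathlib

/-- The fundamental chamber `[0,1] = {(0,t) : 0 ≤ t ≤ 1}` in `ℤ ×_lex ℝ` (the relevant
part of `²*ℝ`). -/
def babelChamberA1 : Set (ℤ × ℝ) := {p | p.1 = 0 ∧ 0 ≤ p.2 ∧ p.2 ≤ 1}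

/-- The 2-level Weyl group `W₂(A₁)` of Parshin's presentation, generated by the
reflections `x ↦ −x`, `x ↦ 2ω₁ − x`, `x ↦ 2ω₂ − x` with `ω₁ = (0,1)`, `ω₂ = (1,0)`. -/
def babelWeylA1 : Subgroup (Equiv.Perm (ℤ × ℝ)) :=
  Subgroup.closure
    {Equiv.subLeft ((0 : ℤ), (0 : ℝ)),
     Equiv.subLeft ((0 : ℤ), (2 : ℝ)),
     Equiv.subLeft ((2 : ℤ), (0 : ℝ))}

lemma subLeft_mul_subLeft (a b : ℤ × ℝ) :
    (Equiv.subLeft a * Equiv.subLeft b : Equiv.Perm (ℤ × ℝ)) = Equiv.addLeft (a - b) := by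
  ext x <;> simp [Equiv.Perm.mul_apply] <;> ring

lemma addLeft_mul_addLeft (a b : ℤ × ℝ) :
    (Equiv.addLeft a * Equiv.addLeft b : Equiv.Perm (ℤ × ℝ)) = Equiv.addLeft (a + b) := by
  ext x <;> simp [Equiv.Perm.mul_apply] <;> ring

lemma addLeft_mul_subLeft (a b : ℤ × ℝ) :
    (Equiv.addLeft a * Equiv.subLeft b : Equiv.Perm (ℤ × ℝ)) = Equiv.subLeft (a + b) := by
  ext x <;> simp [Equiv.Perm.mul_apply] <;> ring

lemma addLeft_mem (n m : ℤ) :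
    Equiv.addLeft ((2 * n : ℤ), (2 * (m : ℝ))) ∈ babelWeylA1 := by
  have h0 : Equiv.subLeft ((0 : ℤ), (0 : ℝ)) ∈ babelWeylA1 :=
    Subgroup.subset_closure (by simp)
  have h1 : Equiv.subLeft ((0 : ℤ), (2 : ℝ)) ∈ babelWeylA1 :=
    Subgroup.subset_closure (by simp)
  have h2 : Equiv.subLeft ((2 : ℤ), (0 : ℝ)) ∈ babelWeylA1 :=
    Subgroup.subset_closure (by simp)
  have a1 : Equiv.addLeft ((0 : ℤ), (2 : ℝ)) ∈ babelWeylA1 := by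
    have := Subgroup.mul_mem _ h1 h0
    rwa [subLeft_mul_subLeft, show ((0:ℤ),(2:ℝ)) - ((0:ℤ),(0:ℝ)) = ((0:ℤ),(2:ℝ)) by simp] at this
  have a2 : Equiv.addLeft ((2 : ℤ), (0 : ℝ)) ∈ babelWeylA1 := by
    have := Subgroup.mul_mem _ h2 h0
    rwa [subLeft_mul_subLeft, show ((2:ℤ),(0:ℝ)) - ((0:ℤ),(0:ℝ)) = ((2:ℤ),(0:ℝ)) by simp] at this
  have key : ∀ v : ℤ × ℝ, Equiv.addLeft v ∈ babelWeylA1 → ∀ w : ℤ × ℝ,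
      Equiv.addLeft w ∈ babelWeylA1 → Equiv.addLeft (v + w) ∈ babelWeylA1 := by
    intro v hv w hw
    have := Subgroup.mul_mem _ hv hw
    rwa [addLeft_mul_addLeft] at this
  have inv : ∀ v : ℤ × ℝ, Equiv.addLeft v ∈ babelWeylA1 → Equiv.addLeft (-v) ∈ babelWeylA1 := by
    intro v hv
    have := Subgroup.inv_mem _ hv
    rwa [show (Equiv.addLeft v : Equiv.Perm (ℤ × ℝ))⁻¹ = Equiv.addLeft (-v) by
      ext x <;> simp] at this
  have hn : ∀ k : ℤ, Equiv.addLeft ((2 * k : ℤ), (0 : ℝ)) ∈ babelWeylA1 := by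
    intro k
    induction k using Int.induction_on with
    | zero => simpa using
        (show Equiv.addLeft ((0:ℤ), (0:ℝ)) ∈ babelWeylA1 by
          have := key _ a2 _ (inv _ a2); simpa using this)
    | succ k ih =>
        have := key _ ih _ a2
        rwa [show ((2*(k:ℤ)), (0:ℝ)) + ((2:ℤ),(0:ℝ)) = ((2*((k:ℤ)+1)), (0:ℝ)) by
          simp [Prod.ext_iff]; ring] at this
    | pred k ih =>
        have := key _ ih _ (inv _ a2)
        rwa [show ((2*(-(k:ℤ))), (0:ℝ)) + -((2:ℤ),(0:ℝ)) = ((2*(-(k:ℤ)-1)), (0:ℝ)) by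
          simp [Prod.ext_iff]; ring] at this
  have hm : ∀ k : ℤ, Equiv.addLeft ((0 : ℤ), (2 * (k : ℝ))) ∈ babelWeylA1 := by
    intro k
    induction k using Int.induction_on with
    | zero => have := key _ a1 _ (inv _ a1); simpa using this
    | succ k ih =>
        have := key _ ih _ a1
        convert this using 2
        simp [Prod.ext_iff]; push_cast; ring
    | pred k ih =>
        have := key _ ih _ (inv _ a1)
        convert this using 2
        simp [Prod.ext_iff]; push_cast; ring
  have := key _ (hn n) _ (hm m)
  rwa [show ((2*n : ℤ), (0:ℝ)) + ((0:ℤ), (2*(m:ℝ))) = ((2*n : ℤ), (2*(m:ℝ))) by simp] at this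

lemma subLeft_mem (n m : ℤ) :
    Equiv.subLeft ((2 * n : ℤ), (2 * (m : ℝ))) ∈ babelWeylA1 := by
  have h0 : Equiv.subLeft ((0 : ℤ), (0 : ℝ)) ∈ babelWeylA1 :=
    Subgroup.subset_closure (by simp)
  have := Subgroup.mul_mem _ (addLeft_mem n m) h0
  rwa [addLeft_mul_subLeft, show ((2*n:ℤ),(2*(m:ℝ))) + ((0:ℤ),(0:ℝ)) = ((2*n:ℤ),(2*(m:ℝ))) by simp]
    at this

/-- Every element of the Weyl group shifts the first coordinate by an even amount. -/
lemma weyl_parity {w : Equiv.Perm (ℤ × ℝ)} (hw : w ∈ babelWeylA1) :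
    ∀ p : ℤ × ℝ, Even ((w p).1 - p.1) := by
  induction hw using Subgroup.closure_induction with
  | mem g hg =>
      rcases hg with h | h | h <;> subst h <;> intro p <;> simp [Equiv.subLeft]
      · exact ⟨-p.1, by ring⟩
      · exact ⟨-p.1, by ring⟩
      · exact ⟨1 - p.1, by ring⟩
  | one => intro p; simp
  | mul x y hx hy ihx ihy =>
      intro p
      have : ((x * y) p).1 - p.1 = ((x (y p)).1 - (y p).1) + ((y p).1 - p.1) := by
        simp [Equiv.Perm.mul_apply]
      rw [this]
      exact (ihx (y p)).add (ihy p)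
  | inv x hx ihx =>
      intro p
      have : (x⁻¹ p).1 - p.1 = -((x (x⁻¹ p)).1 - (x⁻¹ p).1) := by simp
      rw [this]
      exact (ihx (x⁻¹ p)).neg

/-- The 2-level Babel apartment `Σ(2,A₁) = ⋃_{w ∈ W₂(A₁)} w[0,1]` inside
`ℤ ×_lex ℝ` decomposes as the disjoint union `⨆_{n ∈ ℤ} (2n·ω₂ + ℝ)` of affine lines
`{(2n,t) : t ∈ ℝ}`. -/
theorem babelApartmentA1_decomposition :
    ((⋃ w ∈ babelWeylA1, (w : Equiv.Perm (ℤ × ℝ)) '' babelChamberA1)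
      = ⋃ n : ℤ, {p : ℤ × ℝ | p.1 = 2 * n}) ∧
    (∀ n m : ℤ, n ≠ m →
      {p : ℤ × ℝ | p.1 = 2 * n} ∩ {p : ℤ × ℝ | p.1 = 2 * m} = ∅) := by
  constructor
  · apply Set.Subset.antisymm
    · rintro q hq
      simp only [Set.mem_iUnion] at hq ⊢
      obtain ⟨w, hw, p, hp, rfl⟩ := hq
      have := weyl_parity hw p
      rw [hp.1] at this
      obtain ⟨k, hk⟩ := this
      exact ⟨k, by simpa [two_mul] using hk⟩
    · rintro ⟨a, t⟩ hq
      simp only [Set.mem_iUnion, Set.mem_setOf_eq] at hq ⊢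
      obtain ⟨n, rfl⟩ := hq
      set m : ℤ := ⌊t / 2⌋ with hm
      have h1 : 2 * (m : ℝ) ≤ t := by
        have := Int.floor_le (t / 2); linarith
      have h2 : t < 2 * (m : ℝ) + 2 := by
        have := Int.lt_floor_add_one (t / 2); linarith
      by_cases hc : t ≤ 2 * (m : ℝ) + 1
      · refine ⟨Equiv.addLeft ((2 * n : ℤ), (2 * (m : ℝ))), addLeft_mem n m,
          ((0 : ℤ), t - 2 * (m : ℝ)), ⟨rfl, by dsimp only; linarith, by dsimp only; linarith⟩, ?_⟩
        simp [Prod.ext_iff]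
      · refine ⟨Equiv.subLeft ((2 * n : ℤ), (2 * ((m + 1 : ℤ) : ℝ))), subLeft_mem n (m + 1),
          ((0 : ℤ), 2 * ((m + 1 : ℤ) : ℝ) - t), ⟨rfl, by dsimp only; push_cast; linarith, by dsimp only; push_cast; linarith⟩, ?_⟩
        simp [Prod.ext_iff]
  · intro n m hnm
    ext p
    simp only [Set.mem_inter_iff, Set.mem_setOf_eq, Set.mem_empty_iff_false, iff_false]
    rintro ⟨h1, h2⟩
    exact hnm (by omega)
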